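/- Let (V,P) be a graph whose components are isolated vertices, isolated edges, paths of length 2, or triangles, with s isolated edges, d paths of length 2, and t triangles. Let M* be any matching of the ambient graph G=(V,E). Define the charge of an edge (u,v) ∈ M* to a component C of (V,P): C is charged 1 for each endpoint of (u,v) it contains if |C| = 3, charged 1/2 per endpoint if C is an isolated edge, and 0 if C is an isolated vertex. Then the total charge over all edges of M* is at most s + 3d + 3t. -/
import Mathlib


variable {V : Type*} [Fintype V] [DecidableEq V]

/-- A matching of `G`: a finite set of edges of `G` that are pairwise vertex-disjoint. -/
def IsMatching (G : SimpleGraph V) (M : Finset (Sym2 V)) : Prop :=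
  (∀ e ∈ M, e ∈ G.edgeSet) ∧
    ∀ e ∈ M, ∀ f ∈ M, e ≠ f → ∀ v : V, v ∈ e → v ∉ f

/-- A connected component of `H` is a triangle: it has 3 vertices, all pairwise adjacent. -/
def IsTriangleComp (H : SimpleGraph V) (c : H.ConnectedComponent) : Prop :=
  c.supp.ncard = 3 ∧ ∀ x ∈ c.supp, ∀ y ∈ c.supp, x ≠ y → H.Adj x y

/-- A connected component of `H` is a path of length 2: it has 3 vertices and is not
a triangle. -/
def IsPath2Comp (H : SimpleGraph V) (c : H.ConnectedComponent) : Prop :=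
  c.supp.ncard = 3 ∧ ¬ IsTriangleComp H c

/-- The charge received, per endpoint of a matching edge, by the component of that
endpoint in `(V,P)`: `1` if the component has 3 vertices, `1/2` if it is an isolated
edge (2 vertices), and `0` if it is an isolated vertex. -/
noncomputable def vertexCharge (H : SimpleGraph V) (x : V) : ℚ :=
  if (H.connectedComponentMk x).supp.ncard = 3 then 1
  else if (H.connectedComponentMk x).supp.ncard = 2 then 1 / 2
  else 0

/-- The total charge of an edge `(u,v)`: the sum of the charges assigned to the
components of its two endpoints. -/
noncomputable def edgeCharge (H : SimpleGraph V) : Sym2 V → ℚ :=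
  Sym2.lift ⟨fun u v => vertexCharge H u + vertexCharge H v, fun u v => by ring⟩

/-- The total charge of the edges of a matching `M*` to the components of `(V,P)` is at
most `s + 3d + 3t`, where `s`, `d`, `t` count the isolated-edge, length-2-path, and
triangle components of `(V,P)`. -/
theorem total_charge_upper_bound (G H : SimpleGraph V) (hle : H ≤ G)
    (hcomp : ∀ c : H.ConnectedComponent, c.supp.ncard ≤ 3)
    (Mstar : Finset (Sym2 V)) (hMstar : IsMatching G Mstar)
    (s d t : ℕ)
    (hs : s = {c : H.ConnectedComponent | c.supp.ncard = 2}.ncard)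
    (hd : d = {c : H.ConnectedComponent | IsPath2Comp H c}.ncard)
    (ht : t = {c : H.ConnectedComponent | IsTriangleComp H c}.ncard) :
    ∑ e ∈ Mstar, edgeCharge H e ≤ s + 3 * d + 3 * t := by
  classical
  have hnonneg : ∀ x : V, 0 ≤ vertexCharge H x := by
    intro x; unfold vertexCharge; split_ifs <;> norm_num
  set T : Sym2 V → Finset V := fun e => Finset.univ.filter (· ∈ e) with hT
  have hTe : ∀ e ∈ Mstar, edgeCharge H e = ∑ x ∈ T e, vertexCharge H x := by
    intro e he
    have hG : e ∈ G.edgeSet := hMstar.1 e he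
    induction e using Sym2.ind with
    | _ u v =>
      have hne : u ≠ v := (G.mem_edgeSet.mp hG).ne
      have hTuv : T s(u, v) = {u, v} := by
        ext x; simp [hT]
      rw [hTuv, Finset.sum_pair hne]
      rfl
  -- supp card as filter card
  have hsupp : ∀ c : H.ConnectedComponent,
      (Finset.univ.filter fun x => H.connectedComponentMk x = c).card = c.supp.ncard := by
    intro c
    rw [Set.ncard_eq_toFinset_card']
    congr 1
    ext x
    simp [SimpleGraph.ConnectedComponent.mem_supp_iff]
  have hmain : ∑ x : V, vertexCharge H x
      = ∑ c : H.ConnectedComponent,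
          (if c.supp.ncard = 3 then (3 : ℚ) else if c.supp.ncard = 2 then 1 else 0) := by
    rw [← Finset.sum_fiberwise Finset.univ (H.connectedComponentMk) (vertexCharge H)]
    refine Finset.sum_congr rfl fun c _ => ?_
    have hcongr : ∀ x ∈ Finset.univ.filter (fun x => H.connectedComponentMk x = c),
        vertexCharge H x
          = (if c.supp.ncard = 3 then (1 : ℚ) else if c.supp.ncard = 2 then 1/2 else 0) := by
      intro x hx
      have hxc : H.connectedComponentMk x = c := (Finset.mem_filter.mp hx).2
      unfold vertexCharge; rw [hxc]
    rw [Finset.sum_congr rfl hcongr, Finset.sum_const, hsupp c]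
    split_ifs with h3 h2
    · rw [h3]; norm_num
    · rw [h2]; norm_num
    · simp
  set A := Finset.univ.filter fun c : H.ConnectedComponent => c.supp.ncard = 3 with hA
  set B := Finset.univ.filter fun c : H.ConnectedComponent => c.supp.ncard = 2 with hB
  set D := Finset.univ.filter fun c : H.ConnectedComponent => IsPath2Comp H c with hD
  set Tt := Finset.univ.filter fun c : H.ConnectedComponent => IsTriangleComp H c with hTt
  have hsB : s = B.card := by
    rw [hs, Set.ncard_eq_toFinset_card']
    congr 1
    ext c; simp [hB]
  have hdD : d = D.card := by
    rw [hd, Set.ncard_eq_toFinset_card']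
    congr 1
    ext c; simp [hD]
  have htT : t = Tt.card := by
    rw [ht, Set.ncard_eq_toFinset_card']
    congr 1
    ext c; simp [hTt]
  have hAcard : A.card = D.card + Tt.card := by
    have hsplit : A = D ∪ Tt := by
      ext c
      simp only [hA, hD, hTt, Finset.mem_filter, Finset.mem_union, Finset.mem_univ, true_and]
      constructor
      · intro h3
        by_cases htri : IsTriangleComp H c
        · exact Or.inr htri
        · exact Or.inl ⟨h3, htri⟩
      · rintro (⟨h3, _⟩ | htri)
        · exact h3
        · exact htri.1
    have hdisj : Disjoint D Tt := by
      rw [Finset.disjoint_left]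
      intro c hc hc'
      exact (Finset.mem_filter.mp hc).2.2 (Finset.mem_filter.mp hc').2
    rw [hsplit, Finset.card_union_of_disjoint hdisj]
  have hsum2 : ∑ c : H.ConnectedComponent,
      (if c.supp.ncard = 3 then (3 : ℚ) else if c.supp.ncard = 2 then 1 else 0)
      = 3 * A.card + B.card := by
    have heach : ∀ c : H.ConnectedComponent,
        (if c.supp.ncard = 3 then (3 : ℚ) else if c.supp.ncard = 2 then 1 else 0)
        = (if c.supp.ncard = 3 then (3 : ℚ) else 0) + (if c.supp.ncard = 2 then 1 else 0) := by
      intro c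
      split_ifs with h3 h2 h2 <;> first | (exfalso; omega) | ring
    rw [Finset.sum_congr rfl fun c _ => heach c, Finset.sum_add_distrib]
    rw [← Finset.sum_filter, ← Finset.sum_filter]
    simp [hA, hB, mul_comm]
  have hdisjT : ∀ e ∈ Mstar, ∀ f ∈ Mstar, e ≠ f → Disjoint (T e) (T f) := by
    intro e he f hf hne
    rw [Finset.disjoint_left]
    intro x hx hx'
    exact hMstar.2 e he f hf hne x (by simpa [hT] using hx) (by simpa [hT] using hx')
  calc ∑ e ∈ Mstar, edgeCharge H e
      = ∑ e ∈ Mstar, ∑ x ∈ T e, vertexCharge H x := Finset.sum_congr rfl hTe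
    _ = ∑ x ∈ Mstar.biUnion T, vertexCharge H x := (Finset.sum_biUnion hdisjT).symm
    _ ≤ ∑ x : V, vertexCharge H x :=
        Finset.sum_le_sum_of_subset_of_nonneg (Finset.subset_univ _) fun x _ _ => hnonneg x
    _ = (s : ℚ) + 3 * d + 3 * t := by
        rw [hmain, hsum2, hsB, hdD, htT, hAcard]
        push_cast
        ring
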